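/- For every infinite cardinal κ satisfying κ^{<κ} = κ, there exists a simple graph W on a vertex set of cardinality κ that is universal for graphs of cardinality at most κ: every simple graph on a vertex set of cardinality at most κ admits a graph embedding into W (i.e., is isomorphic to an induced subgraph of W). -/

import Mathlib

open Cardinal Set

namespace ExistsUniversalGraphAux

variable {κ : Cardinal.{0}} {V : Type}

lemma regular (hκ : ℵ₀ ≤ κ) (hpow : κ ^< κ = κ) : κ.IsRegular := by
  refine ⟨hκ, ?_⟩
  by_contra h
  push_neg at h
  have h1 : κ < κ ^ κ.ord.cof := Cardinal.lt_power_cof hκ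
  have h2 : κ ^ κ.ord.cof ≤ κ ^< κ := Cardinal.le_powerlt κ h
  rw [hpow] at h2
  exact absurd (h1.trans_le h2) (lt_irrefl κ)

lemma seg_small (r : V → V → Prop) [IsWellOrder V r] (hV : #V = κ)
    (hord : κ.ord = Ordinal.type r) (x : V) :
    #{u // r u x} < κ := by
  have h1 : #{u // r u x} = (Ordinal.typein r x).card := Ordinal.card_typein x
  have h2 : (Ordinal.typein r x).card < #V :=
    Cardinal.card_typein_lt (r := r) x (by rw [hV]; exact hord)
  rw [← hV]
  exact h1 ▸ h2

lemma notCofinal (r : V → V → Prop) [IsWellOrder V r] (hκ : ℵ₀ ≤ κ) (hreg : κ.IsRegular)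
    (hV : #V = κ) (hord : κ.ord = Ordinal.type r) {S : Set V} (hS : #S < κ) :
    #{z | ¬ ∀ w ∈ S, r w z} < κ := by
  have hsub : {z | ¬ ∀ w ∈ S, r w z} ⊆ ⋃ w ∈ S, insert w {z | r z w} := by
    intro z hz
    simp only [mem_setOf_eq] at hz
    push_neg at hz
    obtain ⟨w, hw, hrw⟩ := hz
    refine Set.mem_biUnion hw ?_
    rcases trichotomous_of r z w with h | h | h
    · exact Set.mem_insert_iff.mpr (Or.inr h)
    · exact h ▸ Set.mem_insert _ _
    · exact absurd h hrw
  refine lt_of_le_of_lt (mk_le_mk_of_subset hsub) ?_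
  refine lt_of_le_of_lt (mk_biUnion_le _ _) ?_
  refine Cardinal.mul_lt_of_lt hκ hS ?_
  refine Cardinal.iSup_lt_of_isRegular hreg hS ?_
  intro w
  refine lt_of_le_of_lt Cardinal.mk_insert_le ?_
  exact Cardinal.add_lt_of_lt hκ (seg_small r hV hord w.1) (one_lt_aleph0.trans_le hκ)

lemma exists_bound (r : V → V → Prop) [IsWellOrder V r] (hκ : ℵ₀ ≤ κ) (hreg : κ.IsRegular)
    (hV : #V = κ) (hord : κ.ord = Ordinal.type r) {S : Set V} (hS : #S < κ) :
    ∃ b : V, ∀ w ∈ S, r w b := by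
  have hbad := notCofinal r hκ hreg hV hord hS
  have hns : ¬ (Set.univ ⊆ {z | ¬ ∀ w ∈ S, r w z}) := by
    intro hsub
    have hle := mk_le_mk_of_subset hsub
    rw [mk_univ, hV] at hle
    exact absurd (hle.trans_lt hbad) (lt_irrefl κ)
  obtain ⟨b, -, hb⟩ := Set.not_subset.mp hns
  exact ⟨b, not_not.mp hb⟩

lemma small_sets (r : V → V → Prop) [IsWellOrder V r] (hκ : ℵ₀ ≤ κ) (hreg : κ.IsRegular)
    (hpow : κ ^< κ = κ) (hV : #V = κ) (hord : κ.ord = Ordinal.type r) :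
    #{s : Set V // #s < κ} ≤ κ := by
  have hbound : ∀ s : {s : Set V // #s < κ}, ∃ b : V, ∀ w ∈ s.1, r w b :=
    fun s => exists_bound r hκ hreg hV hord s.2
  choose b hb using hbound
  have hinj : Function.Injective (fun s : {s : Set V // #s < κ} =>
      (⟨b s, {u | u.1 ∈ s.1}⟩ : Σ v : V, Set {u // r u v})) := by
    intro s t h
    have hG := congrArg (fun p : Σ v : V, Set {u // r u v} => Subtype.val '' p.2) h
    dsimp only at hG
    have hs : Subtype.val '' {u : {u // r u (b s)} | u.1 ∈ s.1} = s.1 := by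
      ext v
      constructor
      · rintro ⟨u, hu, rfl⟩; exact hu
      · intro hv; exact ⟨⟨v, hb s v hv⟩, hv, rfl⟩
    have ht : Subtype.val '' {u : {u // r u (b t)} | u.1 ∈ t.1} = t.1 := by
      ext v
      constructor
      · rintro ⟨u, hu, rfl⟩; exact hu
      · intro hv; exact ⟨⟨v, hb t v hv⟩, hv, rfl⟩
    exact Subtype.ext (by rw [← hs, ← ht]; exact hG)
  have hcard := mk_le_of_injective hinj
  refine hcard.trans ?_
  have h2κ : (2 : Cardinal) ≤ κ := by
    refine le_trans ?_ hκ
    exact le_of_lt (Cardinal.lt_aleph0.mpr ⟨2, by norm_num⟩)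
  rw [mk_sigma]
  calc Cardinal.sum (fun v : V => #(Set {u // r u v}))
      ≤ Cardinal.sum (fun _ : V => κ) := by
        refine Cardinal.sum_le_sum _ _ (fun v => ?_)
        rw [mk_set]
        calc (2 : Cardinal) ^ #{u // r u v} ≤ κ ^ #{u // r u v} :=
              Cardinal.power_le_power_right h2κ
          _ ≤ κ ^< κ := Cardinal.le_powerlt κ (seg_small r hV hord v)
          _ = κ := hpow
    _ = #V * κ := Cardinal.sum_const' V κ
    _ = κ := by rw [hV, Cardinal.mul_eq_self hκ]

lemma exists_ec_graph (hκ : ℵ₀ ≤ κ) (hpow : κ ^< κ = κ) (hV : #V = κ) :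
    ∃ W : SimpleGraph V, ∀ X Y : Set V, #X < κ → #Y < κ → Disjoint X Y →
      ∃ z, z ∉ X ∧ z ∉ Y ∧ (∀ x ∈ X, W.Adj z x) ∧ (∀ y ∈ Y, ¬ W.Adj z y) := by
  classical
  have hreg := regular hκ hpow
  obtain ⟨r, wo, hord⟩ := Cardinal.ord_eq V
  haveI := wo
  rw [hV] at hord
  set P := {q : Set V × Set V // (#q.1 < κ ∧ #q.2 < κ) ∧ Disjoint q.1 q.2} with hPdef
  have hPle : #P ≤ κ := by
    have h1 : #P ≤ #({s : Set V // #s < κ} × {s : Set V // #s < κ}) := by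
      refine mk_le_of_injective
        (f := fun q : P => ((⟨q.1.1, q.2.1.1⟩ : {s : Set V // #s < κ}),
          (⟨q.1.2, q.2.1.2⟩ : {s : Set V // #s < κ}))) ?_
      intro q q' h
      have h1 := congrArg (fun x : ({s : Set V // #s < κ} × {s : Set V // #s < κ}) =>
        (x.1 : Set V)) h
      have h2 := congrArg (fun x : ({s : Set V // #s < κ} × {s : Set V // #s < κ}) =>
        (x.2 : Set V)) h
      dsimp only at h1 h2
      exact Subtype.ext (Prod.ext h1 h2)
    refine h1.trans ?_
    simp only [mk_prod, lift_id]
    calc #{s : Set V // #s < κ} * #{s : Set V // #s < κ}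
        ≤ κ * κ := mul_le_mul' (small_sets r hκ hreg hpow hV hord)
            (small_sets r hκ hreg hpow hV hord)
      _ = κ := Cardinal.mul_eq_self hκ
  have hPge : κ ≤ #P := by
    rw [← hV]
    refine mk_le_of_injective (f := fun v : V =>
      (⟨({v}, (∅ : Set V)), ⟨?_, ?_⟩, ?_⟩ : P)) ?_
    · rw [mk_singleton]; exact one_lt_aleph0.trans_le hκ
    · rw [mk_emptyCollection]; exact aleph0_pos.trans_le hκ
    · simp
    · intro v v' h
      have h1 := congrArg (fun q : P => q.1.1) h
      dsimp only at h1
      exact Set.singleton_eq_singleton_iff.mp h1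
  have hPκ : #P = κ := le_antisymm hPle hPge
  have hVP : Nonempty (V ≃ V × P) := by
    rw [← Cardinal.eq]; simp only [mk_prod, lift_id]; rw [hV, hPκ, Cardinal.mul_eq_self hκ]
  obtain ⟨e⟩ := hVP
  set p : V → Set V × Set V := fun v => ((e v).2 : Set V × Set V) with hpdef
  set E : V → Set V := fun v =>
    if ((p v).1 ∪ (p v).2) ⊆ {u | r u v} then (p v).1 else ∅ with hEdef
  have hE : ∀ u v, u ∈ E v → r u v := by
    intro u v hu
    rw [hEdef] at hu
    dsimp only at hu
    split_ifs at hu with h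
    · exact h (Set.mem_union_left _ hu)
    · exact absurd hu (Set.notMem_empty u)
  have hirr : ∀ v : V, ¬ r v v := fun v => irrefl_of r v
  refine ⟨⟨fun u v => u ∈ E v ∨ v ∈ E u, ?_, ?_⟩, ?_⟩
  · constructor
    intro u v h
    exact Or.symm h
  · constructor
    intro v h
    rcases h with h | h <;> exact absurd (hE v v h) (hirr v)
  · intro X Y hX hY hXY
    set q0 : P := ⟨(X, Y), ⟨hX, hY⟩, hXY⟩ with hq0
    set F := {z | (e z).2 = q0} with hFdef
    have hFeq : #F = κ := by
      have hfe : ↥F ≃ V :=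
        { toFun := fun z => (e z.1).1
          invFun := fun v => ⟨e.symm (v, q0), by
            show (e (e.symm (v, q0))).2 = q0
            rw [e.apply_symm_apply]⟩
          left_inv := by
            rintro ⟨z, hz⟩
            apply Subtype.ext
            have hz' : (e z).2 = q0 := hz
            show e.symm ((e z).1, q0) = z
            rw [← hz']
            simp
          right_inv := by
            intro v
            show (e (e.symm (v, q0))).1 = v
            rw [e.apply_symm_apply] }
      rw [← hV]
      exact mk_congr hfe
    have hSU : #(X ∪ Y : Set V) < κ :=
      (mk_union_le X Y).trans_lt (Cardinal.add_lt_of_lt hκ hX hY)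
    have hBad : #{z | ¬ ∀ w ∈ (X ∪ Y : Set V), r w z} < κ :=
      notCofinal r hκ hreg hV hord hSU
    have hns : ¬ (F ⊆ {z | ¬ ∀ w ∈ (X ∪ Y : Set V), r w z}) := by
      intro hsub
      have hle := mk_le_mk_of_subset hsub
      rw [hFeq] at hle
      exact absurd (hle.trans_lt hBad) (lt_irrefl κ)
    obtain ⟨z, hzF, hzB⟩ := Set.not_subset.mp hns
    have hgood : ∀ w ∈ (X ∪ Y : Set V), r w z := not_not.mp hzB
    have hzF' : (e z).2 = q0 := hzF
    have hpz : p z = (X, Y) := by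
      rw [hpdef]
      dsimp only
      rw [hzF']
    have hEz : E z = X := by
      rw [hEdef]
      dsimp only
      rw [hpz]
      exact if_pos (fun w hw => hgood w hw)
    refine ⟨z, ?_, ?_, ?_, ?_⟩
    · intro hx
      exact hirr z (hgood z (Set.mem_union_left _ hx))
    · intro hy
      exact hirr z (hgood z (Set.mem_union_right _ hy))
    · intro x hx
      exact Or.inr (hEz ▸ hx)
    · rintro y hy (h | h)
      · exact hirr z (trans_of r (hE z y h) (hgood y (Set.mem_union_right _ hy)))
      · rw [hEz] at h
        exact (Set.disjoint_right.mp hXY hy) h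

lemma embed (hκ : ℵ₀ ≤ κ) (hV : #V = κ) (W : SimpleGraph V)
    (Hext : ∀ X Y : Set V, #X < κ → #Y < κ → Disjoint X Y →
      ∃ z, z ∉ X ∧ z ∉ Y ∧ (∀ x ∈ X, W.Adj z x) ∧ (∀ y ∈ Y, ¬ W.Adj z y))
    (α : Type) (T : SimpleGraph α) (hα : #α ≤ κ) : Nonempty (T ↪g W) := by
  classical
  haveI hNV : Nonempty V := by
    rw [← mk_ne_zero_iff, hV]
    exact (aleph0_pos.trans_le hκ).ne'
  obtain ⟨r, wo, hord⟩ := Cardinal.ord_eq V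
  haveI := wo
  rw [hV] at hord
  obtain ⟨g⟩ : Nonempty (α ↪ V) := by
    rw [← hV] at hα
    exact Cardinal.le_def α V |>.mp hα
  set s : α → α → Prop := fun a b => r (g a) (g b) with hsdef
  have hwf : WellFounded s := InvImage.wf g IsWellFounded.wf
  have tri : ∀ a b : α, s a b ∨ a = b ∨ s b a := by
    intro a b
    rcases trichotomous_of r (g a) (g b) with h | h | h
    · exact Or.inl h
    · exact Or.inr (Or.inl (g.injective h))
    · exact Or.inr (Or.inr h)
  have segα : ∀ a : α, #{b | s b a} < κ := by
    intro a
    have hle : #{b // s b a} ≤ #{u // r u (g a)} := by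
      refine mk_le_of_injective (f := fun b : {b // s b a} =>
        (⟨g b.1, b.2⟩ : {u // r u (g a)})) ?_
      intro x y h
      exact Subtype.ext (g.injective (congrArg Subtype.val h))
    exact hle.trans_lt (seg_small r hV hord (g a))
  have hwit : ∀ X Y : Set V, ∃ z : V, (#X < κ ∧ #Y < κ ∧ Disjoint X Y) →
      (z ∉ X ∧ z ∉ Y ∧ (∀ x ∈ X, W.Adj z x) ∧ (∀ y ∈ Y, ¬ W.Adj z y)) := by
    intro X Y
    by_cases h : #X < κ ∧ #Y < κ ∧ Disjoint X Y
    · obtain ⟨z, hz⟩ := Hext X Y h.1 h.2.1 h.2.2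
      exact ⟨z, fun _ => hz⟩
    · exact ⟨Classical.arbitrary V, fun h' => absurd h' h⟩
  choose wit wit_spec using hwit
  set F : ∀ a : α, (∀ b, s b a → V) → V := fun a ih =>
    wit {v | ∃ b, ∃ h : s b a, T.Adj a b ∧ ih b h = v}
        {v | ∃ b, ∃ h : s b a, ¬ T.Adj a b ∧ ih b h = v} with hFdef
  set f : α → V := hwf.fix F with hfdef
  have feq : ∀ a, f a = wit {v | ∃ b, ∃ _h : s b a, T.Adj a b ∧ f b = v}
      {v | ∃ b, ∃ _h : s b a, ¬ T.Adj a b ∧ f b = v} := fun a => hwf.fix_eq F a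
  have main : ∀ a : α, ∀ b, s b a → f a ≠ f b ∧ (W.Adj (f a) (f b) ↔ T.Adj a b) := by
    intro a
    refine hwf.induction
      (C := fun x => ∀ b, s b x → f x ≠ f b ∧ (W.Adj (f x) (f b) ↔ T.Adj x b)) a ?_
    intro x IH
    have injf : ∀ b b', s b x → s b' x → b ≠ b' → f b ≠ f b' := by
      intro b b' hb hb' hne
      rcases tri b b' with h | h | h
      · exact Ne.symm (IH b' hb' b h).1
      · exact absurd h hne
      · exact (IH b hb b' h).1
    set X := {v | ∃ b, ∃ _h : s b x, T.Adj x b ∧ f b = v} with hXdef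
    set Y := {v | ∃ b, ∃ _h : s b x, ¬ T.Adj x b ∧ f b = v} with hYdef
    have hfx : f x = wit X Y := feq x
    have hX : #X < κ := by
      have hsub : X ⊆ f '' {b | s b x} := by
        rintro v ⟨b, hb, -, rfl⟩
        exact ⟨b, hb, rfl⟩
      calc #X ≤ #(f '' {b | s b x}) := mk_le_mk_of_subset hsub
        _ ≤ #{b | s b x} := mk_image_le
        _ < κ := segα x
    have hY : #Y < κ := by
      have hsub : Y ⊆ f '' {b | s b x} := by
        rintro v ⟨b, hb, -, rfl⟩
        exact ⟨b, hb, rfl⟩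
      calc #Y ≤ #(f '' {b | s b x}) := mk_le_mk_of_subset hsub
        _ ≤ #{b | s b x} := mk_image_le
        _ < κ := segα x
    have hdisj : Disjoint X Y := by
      rw [Set.disjoint_left]
      rintro v ⟨b, hb, hab, rfl⟩ ⟨b', hb', hab', he⟩
      have hne : b' ≠ b := fun h => hab' (h ▸ hab)
      exact injf b' b hb' hb hne he
    obtain ⟨h1, h2, h3, h4⟩ := wit_spec X Y ⟨hX, hY, hdisj⟩
    rw [← hfx] at h1 h2 h3 h4
    intro b hb
    by_cases hadj : T.Adj x b
    · have hbX : f b ∈ X := ⟨b, hb, hadj, rfl⟩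
      refine ⟨fun h => h1 (by rw [h]; exact hbX), ?_⟩
      exact ⟨fun _ => hadj, fun _ => h3 _ hbX⟩
    · have hbY : f b ∈ Y := ⟨b, hb, hadj, rfl⟩
      refine ⟨fun h => h2 (by rw [h]; exact hbY), ?_⟩
      exact ⟨fun h => absurd h (h4 _ hbY), fun h => absurd h hadj⟩
  refine ⟨⟨⟨f, ?_⟩, ?_⟩⟩
  · intro a b h
    by_contra hne
    rcases tri a b with ht | ht | ht
    · exact (main b a ht).1 h.symm
    · exact hne ht
    · exact (main a b ht).1 h
  · intro a b
    rcases tri a b with ht | ht | ht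
    · constructor
      · intro h
        exact ((main b a ht).2.mp h.symm).symm
      · intro h
        exact ((main b a ht).2.mpr h.symm).symm
    · subst ht
      simp
    · exact (main a b ht).2

end ExistsUniversalGraphAux

/-- For every infinite cardinal `κ` with `κ^{<κ} = κ` there is a simple graph on a vertex
set of cardinality `κ` which is universal for graphs of cardinality at most `κ`:
every simple graph on a vertex set of cardinality `≤ κ` admits a graph embedding into it. -/
theorem exists_universal_graph (κ : Cardinal.{0}) (hκ : ℵ₀ ≤ κ) (hpow : κ ^< κ = κ) :
    ∃ W : SimpleGraph κ.out,
      ∀ (α : Type) (T : SimpleGraph α), #α ≤ κ → Nonempty (T ↪g W) := by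
  obtain ⟨W, hW⟩ := ExistsUniversalGraphAux.exists_ec_graph hκ hpow (Cardinal.mk_out κ)
  exact ⟨W, fun α T hα => ExistsUniversalGraphAux.embed hκ (Cardinal.mk_out κ) W hW α T hα⟩
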